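/- Let N, n be as above (N ≥ n+5, n even, n > 2, k = n/2) and v the tuple defined there. Then −v is not a permutation of v; that is, the multiset of entries of v is not equal to the multiset of their negatives in Z/NZ. -/
import Mathlib


/-- For the tuple `v` as above (`N ≥ n + 5`, `n` even, `n > 2`, `k = n/2`),
`−v` is not a permutation of `v`: the multiset of entries of `v` differs from
the multiset of their negatives in `Z/NZ`. -/
theorem stmt_9 (N n : ℕ) (hn : Even n) (hn2 : 2 < n)
    (hN : n + 5 ≤ N) (k : ℕ) (hk : k = n / 2) :
    let v : Multiset (ZMod N) :=
      Multiset.replicate (n + 1) (0 : ZMod N) +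
        {(2 : ZMod N), ((k : ZMod N) + 1)} +
        Multiset.map (fun j : ℕ => (j : ZMod N)) (Finset.Icc (k + 3) (N - k - 2)).val +
        {((N : ZMod N) - 1)}
    Multiset.map (fun x : ZMod N => -x) v ≠ v := by
  intro v
  obtain ⟨r, hr⟩ := hn
  have hn4 : 4 ≤ n := by omega
  have hk2 : 2 ≤ k := by omega
  have hkN : k + 2 < N := by omega
  have hN9 : 9 ≤ N := by omega
  haveI : NeZero N := ⟨by omega⟩
  have hcast : ∀ a b : ℕ, a < N → b < N → (a : ZMod N) = b → a = b := by
    intro a b ha hb h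
    have := congrArg ZMod.val h
    rwa [ZMod.val_natCast_of_lt ha, ZMod.val_natCast_of_lt hb] at this
  intro hEq
  -- count of 1 in v is 0
  have h1 : Multiset.count (1 : ZMod N) v = 0 := by
    rw [Multiset.count_eq_zero]
    intro hmem
    simp only [v, Multiset.mem_add, Multiset.mem_replicate, Multiset.mem_map,
      Multiset.mem_singleton, Multiset.insert_eq_cons, Multiset.mem_cons,
      Finset.mem_val, Finset.mem_Icc] at hmem
    rcases hmem with ((⟨_, h⟩ | (h | h)) | ⟨j, ⟨hj1, hj2⟩, h⟩) | h
    · have : (1 : ℕ) = (0 : ℕ) := by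
        apply hcast 1 0 (by omega) (by omega); push_cast; linear_combination h
      omega
    · have : (1 : ℕ) = (2 : ℕ) := by
        apply hcast 1 2 (by omega) (by omega); push_cast; linear_combination h
      omega
    · have : (1 : ℕ) = k + 1 := by
        apply hcast 1 (k+1) (by omega) (by omega); push_cast; linear_combination h
      omega
    · have : j = (1 : ℕ) := by
        apply hcast j 1 (by omega) (by omega); push_cast; linear_combination h
      omega
    · rw [ZMod.natCast_self] at h
      have : (2 : ℕ) = (0 : ℕ) := by
        apply hcast 2 0 (by omega) (by omega)
        push_cast
        linear_combination h
      omega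
  -- count of 1 in -v is 1, i.e. count of -1 in v is 1
  have hneg : Multiset.count (1 : ZMod N) (Multiset.map (fun x : ZMod N => -x) v)
      = Multiset.count (-1 : ZMod N) v := by
    have := Multiset.count_map_eq_count' (fun x : ZMod N => -x) v neg_injective (-1)
    simpa using this
  have h2 : Multiset.count (-1 : ZMod N) v = 1 := by
    simp only [v, Multiset.count_add]
    have c1 : Multiset.count (-1 : ZMod N) (Multiset.replicate (n + 1) (0 : ZMod N)) = 0 := by
      rw [Multiset.count_replicate, if_neg]
      intro h
      have : (1 : ℕ) = (0 : ℕ) := by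
        apply hcast 1 0 (by omega) (by omega)
        push_cast
        linear_combination h
      omega
    have c2 : Multiset.count (-1 : ZMod N) ({(2 : ZMod N), ((k : ZMod N) + 1)} : Multiset (ZMod N)) = 0 := by
      rw [Multiset.count_eq_zero]
      intro hmem
      simp only [Multiset.insert_eq_cons, Multiset.mem_cons, Multiset.mem_singleton] at hmem
      rcases hmem with h | h
      · have : (3 : ℕ) = (0 : ℕ) := by
          apply hcast 3 0 (by omega) (by omega)
          push_cast
          linear_combination -h
        omega
      · have : k + 2 = (0 : ℕ) := by
          apply hcast (k+2) 0 (by omega) (by omega)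
          push_cast
          linear_combination -h
        omega
    have c3 : Multiset.count (-1 : ZMod N)
        (Multiset.map (fun j : ℕ => (j : ZMod N)) (Finset.Icc (k + 3) (N - k - 2)).val) = 0 := by
      rw [Multiset.count_eq_zero]
      intro hmem
      simp only [Multiset.mem_map, Finset.mem_val, Finset.mem_Icc] at hmem
      obtain ⟨j, ⟨hj1, hj2⟩, h⟩ := hmem
      have : j = N - 1 := by
        apply hcast j (N - 1) (by omega) (by omega)
        rw [Nat.cast_sub (by omega : 1 ≤ N), Nat.cast_one, ZMod.natCast_self]
        linear_combination h
      omega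
    have c4 : Multiset.count (-1 : ZMod N) ({((N : ZMod N) - 1)} : Multiset (ZMod N)) = 1 := by
      rw [ZMod.natCast_self]
      simp
    rw [c1, c2, c3, c4]
  rw [hEq, h2] at hneg
  rw [h1] at hneg
  exact one_ne_zero hneg.symm
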